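/- For every integer p ≥ 3 and every β > β_0 > β*(p), the equality sup_{x ∈ η_p^{−1}((β,∞))} H_{β_0,p}(x) = sup_{x ∈ (m_*(β,p), 1]} H_{β_0,p}(x) holds if and only if H_{β_0,p}(m_*(β,p)) ≥ 0, where η_p^{−1}((β,∞)) = {t ∈ [−1,1] : η_p(t) > β}. -/

import Mathlib

open Real Set Filter

/-- `I(x) = ½[(1+x)log(1+x) + (1−x)log(1−x)]` (with `Real.log 0 = 0`). -/
noncomputable def bahI (x : ℝ) : ℝ :=
  ((1 + x) * Real.log (1 + x) + (1 - x) * Real.log (1 - x)) / 2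

/-- `H_{β,p}(x) = β xᵖ − I(x)`. -/
noncomputable def bahH (β : ℝ) (p : ℕ) (x : ℝ) : ℝ := β * x ^ p - bahI x

/-- `β*(p) = sup {β ≥ 0 : sup_{x∈[−1,1]} H_{β,p}(x) = 0}`. -/
noncomputable def betaStar (p : ℕ) : ℝ :=
  sSup {β : ℝ | 0 ≤ β ∧ sSup (bahH β p '' Set.Icc (-1 : ℝ) 1) = 0}

/-- inverse hyperbolic tangent. -/
noncomputable def arctanh (x : ℝ) : ℝ := Real.log ((1 + x) / (1 - x)) / 2

/-- `η_p(t) = p⁻¹ t^{1−p} arctanh t` for `t ≠ 0`, and `η_p(0) = 0`. -/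
noncomputable def etaFn (p : ℕ) (t : ℝ) : ℝ :=
  if t = 0 then 0 else (p : ℝ)⁻¹ * t ^ (1 - (p : ℤ)) * arctanh t

open Topology

lemma arctanh_eq {x : ℝ} (h1 : -1 < x) (h2 : x < 1) :
    arctanh x = (Real.log (1 + x) - Real.log (1 - x)) / 2 := by
  rw [arctanh, Real.log_div (by linarith) (by linarith)]

lemma hasDerivAt_arctanh {x : ℝ} (h1 : -1 < x) (h2 : x < 1) :
    HasDerivAt arctanh (1 / (1 - x ^ 2)) x := by
  have hd : HasDerivAt (fun y : ℝ => (Real.log (1 + y) - Real.log (1 - y)) / 2)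
      ((1 / (1 + x) * 1 - 1 / (1 - x) * (-1)) / 2) x := by
    have h1' : HasDerivAt (fun y : ℝ => Real.log (1 + y)) (1 / (1 + x) * 1) x := by
      have := (Real.hasDerivAt_log (by linarith : (1:ℝ) + x ≠ 0)).comp x
        ((hasDerivAt_id x).const_add 1)
      simpa [one_div, Function.comp_def] using this
    have h2' : HasDerivAt (fun y : ℝ => Real.log (1 - y)) (1 / (1 - x) * (-1)) x := by
      have := (Real.hasDerivAt_log (by linarith : (1:ℝ) - x ≠ 0)).comp x
        ((hasDerivAt_id x).neg.const_add 1)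
      simpa [one_div, sub_eq_add_neg, Function.comp_def] using this
    exact (h1'.sub h2').div_const 2
  have heq : (1 / (1 + x) * 1 - 1 / (1 - x) * (-1)) / 2 = 1 / (1 - x ^ 2) := by
    have e1 : (1:ℝ) + x ≠ 0 := by linarith
    have e2 : (1:ℝ) - x ≠ 0 := by linarith
    have e3 : (1:ℝ) - x ^ 2 ≠ 0 := by nlinarith [sq_nonneg x]
    field_simp
    ring
  rw [heq] at hd
  apply hd.congr_of_eventuallyEq
  filter_upwards [Ioo_mem_nhds h1 h2] with y hy
  exact arctanh_eq hy.1 hy.2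

lemma hasDerivAt_bahI {x : ℝ} (h1 : -1 < x) (h2 : x < 1) :
    HasDerivAt bahI (arctanh x) x := by
  have ha : HasDerivAt (fun y : ℝ => (1 + y) * Real.log (1 + y))
      (1 * Real.log (1 + x) + (1 + x) * (1 / (1 + x) * 1)) x := by
    have hl : HasDerivAt (fun y : ℝ => Real.log (1 + y)) (1 / (1 + x) * 1) x := by
      have := (Real.hasDerivAt_log (by linarith : (1:ℝ) + x ≠ 0)).comp x
        ((hasDerivAt_id x).const_add 1)
      simpa [one_div, Function.comp_def] using this
    exact (((hasDerivAt_id x).const_add 1).congr_deriv (by simp)).mul hl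
  have hb : HasDerivAt (fun y : ℝ => (1 - y) * Real.log (1 - y))
      ((-1) * Real.log (1 - x) + (1 - x) * (1 / (1 - x) * (-1))) x := by
    have hl : HasDerivAt (fun y : ℝ => Real.log (1 - y)) (1 / (1 - x) * (-1)) x := by
      have := (Real.hasDerivAt_log (by linarith : (1:ℝ) - x ≠ 0)).comp x
        ((hasDerivAt_id x).neg.const_add 1)
      simpa [one_div, sub_eq_add_neg, Function.comp_def] using this
    have hu : HasDerivAt (fun y : ℝ => 1 - y) (-1 : ℝ) x := by
      simpa [sub_eq_add_neg] using ((hasDerivAt_id x).neg.const_add 1)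
    exact hu.mul hl
  have := (ha.add hb).div_const 2
  have heq : (1 * Real.log (1 + x) + (1 + x) * (1 / (1 + x) * 1) +
      ((-1) * Real.log (1 - x) + (1 - x) * (1 / (1 - x) * (-1)))) / 2 = arctanh x := by
    rw [arctanh_eq h1 h2]
    have e1 : (1:ℝ) + x ≠ 0 := by linarith
    have e2 : (1:ℝ) - x ≠ 0 := by linarith
    field_simp
    ring
  rw [heq] at this
  exact this

lemma continuous_bahI : Continuous bahI := by
  have h := Real.continuous_mul_log
  exact (((h.comp (continuous_const.add continuous_id)).add
    (h.comp (continuous_const.sub continuous_id))).div_const 2)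

lemma continuous_bahH (β : ℝ) (p : ℕ) : Continuous (bahH β p) :=
  (continuous_const.mul (continuous_pow p)).sub continuous_bahI

lemma hasDerivAt_bahH (β : ℝ) (p : ℕ) {x : ℝ} (h1 : -1 < x) (h2 : x < 1) :
    HasDerivAt (bahH β p) (β * ((p : ℝ) * x ^ (p - 1)) - arctanh x) x :=
  ((hasDerivAt_pow p x).const_mul β).sub (hasDerivAt_bahI h1 h2)

lemma bahI_zero : bahI 0 = 0 := by simp [bahI]

lemma bahH_zero (β : ℝ) (p : ℕ) (hp : p ≠ 0) : bahH β p 0 = 0 := by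
  simp [bahH, bahI_zero, zero_pow hp]

lemma arctanh_zero : arctanh 0 = 0 := by simp [arctanh]

lemma arctanh_one : arctanh 1 = 0 := by simp [arctanh]

lemma arctanh_negone : arctanh (-1) = 0 := by
  simp [arctanh]

lemma arctanh_neg {x : ℝ} (h1 : -1 < x) (h2 : x < 1) : arctanh (-x) = - arctanh x := by
  rw [arctanh_eq (by linarith) (by linarith), arctanh_eq h1 h2]
  rw [show (1:ℝ) + -x = 1 - x by ring, show (1:ℝ) - -x = 1 + x by ring]
  ring

lemma bahI_neg (x : ℝ) : bahI (-x) = bahI x := by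
  rw [bahI, bahI, show (1:ℝ) + -x = 1 - x by ring, show (1:ℝ) - -x = 1 + x by ring]
  ring

noncomputable def phiF (p : ℕ) (t : ℝ) : ℝ := t / (1 - t ^ 2) - ((p : ℝ) - 1) * arctanh t

/-- the auxiliary rescaled eta -/
noncomputable def gF (p : ℕ) (t : ℝ) : ℝ := arctanh t / t ^ (p - 1)

lemma etaFn_eq {p : ℕ} (hp : 1 ≤ p) {t : ℝ} (ht : t ≠ 0) :
    etaFn p t = (p : ℝ)⁻¹ * gF p t := by
  rw [etaFn, if_neg ht, gF]
  have h : (1 - (p : ℤ)) = -((p - 1 : ℕ) : ℤ) := by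
    push_cast [Nat.cast_sub hp]; ring
  rw [h, zpow_neg, zpow_natCast]
  field_simp

lemma phiF_zero (p : ℕ) : phiF p 0 = 0 := by simp [phiF, arctanh_zero]

lemma hasDerivAt_phiF (p : ℕ) {t : ℝ} (h1 : -1 < t) (h2 : t < 1) :
    HasDerivAt (phiF p) ((2 - (p : ℝ) + (p : ℝ) * t ^ 2) / (1 - t ^ 2) ^ 2) t := by
  have e3 : (1 : ℝ) - t ^ 2 ≠ 0 := by nlinarith [sq_nonneg t]
  have hq : HasDerivAt (fun y : ℝ => y / (1 - y ^ 2))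
      ((1 * (1 - t ^ 2) - t * (-((2:ℕ) * t ^ (2 - 1)))) / (1 - t ^ 2) ^ 2) t :=
    (hasDerivAt_id t).div ((hasDerivAt_pow 2 t).const_sub 1) e3
  have ha : HasDerivAt (fun y : ℝ => ((p : ℝ) - 1) * arctanh y)
      (((p : ℝ) - 1) * (1 / (1 - t ^ 2))) t := (hasDerivAt_arctanh h1 h2).const_mul _
  have := hq.sub ha
  convert this using 1
  · rfl
  · rfl
  · rfl
  field_simp
  ring

lemma hasDerivAt_gF (p : ℕ) (hp : 3 ≤ p) {t : ℝ} (h1 : 0 < t) (h2 : t < 1) :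
    HasDerivAt (gF p) (t ^ (p - 2) * phiF p t / (t ^ (p - 1)) ^ 2) t := by
  have ht : t ^ (p - 1) ≠ 0 := pow_ne_zero _ (ne_of_gt h1)
  have hd : HasDerivAt (gF p)
      ((1 / (1 - t ^ 2) * t ^ (p - 1) - arctanh t * ((p - 1 : ℕ) * t ^ (p - 1 - 1))) /
        (t ^ (p - 1)) ^ 2) t :=
    (hasDerivAt_arctanh (by linarith) h2).div (hasDerivAt_pow (p - 1) t) ht
  convert hd using 2
  have e3 : (1 : ℝ) - t ^ 2 ≠ 0 := by nlinarith [sq_nonneg t]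
  have hc : ((p - 1 : ℕ) : ℝ) = (p : ℝ) - 1 := by
    push_cast [Nat.cast_sub (by omega : 1 ≤ p)]; ring
  have h12 : p - 1 - 1 = p - 2 := by omega
  have h12' : p - 1 = (p - 2) + 1 := by omega
  rw [phiF, hc, h12, h12', pow_succ]
  field_simp
  ring

lemma phiF_struct (p : ℕ) (hp : 3 ≤ p) {x y : ℝ} (hy : 0 < y) (hyx : y < x) (hx : x < 1)
    (hφ : phiF p x ≤ 0) : phiF p y < 0 := by
  set s₀ : ℝ := Real.sqrt (((p : ℝ) - 2) / p) with hs₀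
  have hp3 : (3 : ℝ) ≤ (p : ℝ) := by exact_mod_cast hp
  have hr : ((p : ℝ) - 2) / p < 1 := by
    rw [div_lt_one (by linarith)]; linarith
  have hr0 : 0 < ((p : ℝ) - 2) / p := div_pos (by linarith) (by linarith)
  have hs1 : s₀ < 1 := by
    rw [hs₀, show (1:ℝ) = Real.sqrt 1 by simp]
    exact Real.sqrt_lt_sqrt (le_of_lt hr0) hr
  have hs0 : 0 < s₀ := Real.sqrt_pos.2 hr0
  have hsq : s₀ ^ 2 = ((p : ℝ) - 2) / p := Real.sq_sqrt (le_of_lt hr0)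
  have hsq' : s₀ ^ 2 * (p : ℝ) = (p : ℝ) - 2 := by
    rw [hsq]; field_simp
  -- φ strictly antitone on [0, s₀]
  have hanti : StrictAntiOn (phiF p) (Icc 0 s₀) := by
    apply strictAntiOn_of_deriv_neg (convex_Icc 0 s₀)
    · intro z hz
      exact (hasDerivAt_phiF p (by linarith [hz.1]) (by linarith [hz.2])).continuousAt.continuousWithinAt
    · intro z hz
      rw [interior_Icc] at hz
      have hz1 : z < 1 := lt_trans hz.2 hs1
      rw [(hasDerivAt_phiF p (by linarith [hz.1]) hz1).deriv]
      apply div_neg_of_neg_of_pos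
      · have h2 : z ^ 2 < s₀ ^ 2 := by nlinarith [hz.1, hz.2]
        nlinarith
      · exact pow_pos (by nlinarith [mul_pos (sub_pos.2 hz1) (by linarith [hz.1] : (0:ℝ) < 1 + z)]) 2
  -- φ strictly monotone on [s₀, 1)
  have hmono : StrictMonoOn (phiF p) (Ico s₀ 1) := by
    apply strictMonoOn_of_deriv_pos (convex_Ico s₀ 1)
    · intro z hz
      exact (hasDerivAt_phiF p (by linarith [hz.1]) hz.2).continuousAt.continuousWithinAt
    · intro z hz
      rw [interior_Ico] at hz
      rw [(hasDerivAt_phiF p (by linarith [hz.1]) hz.2).deriv]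
      apply div_pos
      · have h2 : s₀ ^ 2 < z ^ 2 := by nlinarith [hz.1, hz.2]
        nlinarith
      · exact pow_pos (by nlinarith [mul_pos (sub_pos.2 hz.2) (by linarith [hz.1] : (0:ℝ) < 1 + z)]) 2
  rcases le_or_gt y s₀ with hc | hc
  · have := hanti (left_mem_Icc.2 (le_of_lt hs0)) ⟨le_of_lt hy, hc⟩ hy
    rwa [phiF_zero] at this
  · -- y > s₀, so x > s₀ too; φ y < φ x ≤ 0
    have hx0 : x ∈ Ico s₀ 1 := ⟨by linarith, hx⟩
    have hy0 : y ∈ Ico s₀ 1 := ⟨le_of_lt hc, by linarith⟩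
    exact lt_of_lt_of_le (hmono hy0 hx0 hyx) hφ

lemma phiF_struct' (p : ℕ) (hp : 3 ≤ p) {x y : ℝ} (hx : 0 < x) (hxy : x < y) (hy : y < 1)
    (hφ : 0 ≤ phiF p x) : 0 < phiF p y := by
  by_contra h
  exact absurd hφ (not_le.2 (phiF_struct p hp hx hxy hy (not_lt.1 h)))

lemma gF_anti (p : ℕ) (hp : 3 ≤ p) {c : ℝ} (hc0 : 0 < c) (hc1 : c < 1)
    (hφ : phiF p c ≤ 0) : StrictAntiOn (gF p) (Ioc 0 c) := by
  apply strictAntiOn_of_deriv_neg (convex_Ioc 0 c)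
  · intro z hz
    exact (hasDerivAt_gF p hp hz.1 (lt_of_le_of_lt hz.2 hc1)).continuousAt.continuousWithinAt
  · intro z hz
    rw [interior_Ioc] at hz
    have hz1 : z < 1 := lt_trans hz.2 hc1
    rw [(hasDerivAt_gF p hp hz.1 hz1).deriv]
    apply div_neg_of_neg_of_pos
    · exact mul_neg_of_pos_of_neg (pow_pos hz.1 _) (phiF_struct p hp hz.1 hz.2 hc1 hφ)
    · exact pow_pos (pow_pos hz.1 _) 2
  
lemma gF_mono (p : ℕ) (hp : 3 ≤ p) {c : ℝ} (hc0 : 0 < c) (hc1 : c < 1)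
    (hφ : 0 ≤ phiF p c) : StrictMonoOn (gF p) (Ico c 1) := by
  apply strictMonoOn_of_deriv_pos (convex_Ico c 1)
  · intro z hz
    exact (hasDerivAt_gF p hp (lt_of_lt_of_le hc0 hz.1) hz.2).continuousAt.continuousWithinAt
  · intro z hz
    rw [interior_Ico] at hz
    have hz0 : 0 < z := lt_trans hc0 hz.1
    rw [(hasDerivAt_gF p hp hz0 hz.2).deriv]
    apply div_pos
    · exact mul_pos (pow_pos hz0 _) (phiF_struct' p hp hc0 hz.1 hz.2 hφ)
    · exact pow_pos (pow_pos hz0 _) 2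


lemma le_csSup_of_approx {f : ℝ → ℝ} {S : Set ℝ} {c : ℝ} (hbdd : BddAbove (f '' S))
    (h : ∀ ε > 0, ∃ x ∈ S, c - ε < f x) : c ≤ sSup (f '' S) := by
  by_contra hlt
  push_neg at hlt
  obtain ⟨x, hx, hfx⟩ := h (c - sSup (f '' S)) (by linarith)
  have hle : f x ≤ sSup (f '' S) := le_csSup hbdd ⟨x, hx, rfl⟩
  linarith

lemma mul_log_ge {u : ℝ} (hu : 0 ≤ u) : u - 1 ≤ u * Real.log u := by
  rcases eq_or_lt_of_le hu with h | h
  · simp [← h]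
  · have h1 : Real.log u⁻¹ ≤ u⁻¹ - 1 := Real.log_le_sub_one_of_pos (inv_pos.2 h)
    rw [Real.log_inv] at h1
    have h2 : u * u⁻¹ = 1 := mul_inv_cancel₀ (ne_of_gt h)
    nlinarith

lemma bahI_nonneg {x : ℝ} (h1 : -1 ≤ x) (h2 : x ≤ 1) : 0 ≤ bahI x := by
  have ha := mul_log_ge (by linarith : (0:ℝ) ≤ 1 + x)
  have hb := mul_log_ge (by linarith : (0:ℝ) ≤ 1 - x)
  rw [bahI]
  linarith

lemma bahI_one : bahI 1 = Real.log 2 := by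
  norm_num [bahI]

lemma betaStar_nonneg (p : ℕ) (hp : p ≠ 0) : 0 ≤ betaStar p := by
  have hmem : (0:ℝ) ∈ {β : ℝ | 0 ≤ β ∧ sSup (bahH β p '' Set.Icc (-1 : ℝ) 1) = 0} := by
    refine ⟨le_refl 0, le_antisymm ?_ ?_⟩
    · apply csSup_le (Set.Nonempty.image _ ⟨0, by norm_num⟩)
      rintro y ⟨x, hx, rfl⟩
      have := bahI_nonneg hx.1 hx.2
      simp only [bahH, zero_mul, zero_sub]
      linarith
    · refine le_csSup ⟨0, ?_⟩ ⟨0, by norm_num, bahH_zero 0 p hp⟩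
      rintro y ⟨x, hx, rfl⟩
      have := bahI_nonneg hx.1 hx.2
      simp only [bahH, zero_mul, zero_sub]
      linarith
  have hbdd : BddAbove {β : ℝ | 0 ≤ β ∧ sSup (bahH β p '' Set.Icc (-1 : ℝ) 1) = 0} := by
    refine ⟨Real.log 2, ?_⟩
    rintro β ⟨hβ0, hβs⟩
    have hcb : BddAbove (bahH β p '' Set.Icc (-1 : ℝ) 1) :=
      (isCompact_Icc.image_of_continuousOn (continuous_bahH β p).continuousOn).bddAbove
    have h1 : bahH β p 1 ≤ sSup (bahH β p '' Set.Icc (-1 : ℝ) 1) :=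
      le_csSup hcb ⟨1, by norm_num, rfl⟩
    rw [hβs] at h1
    simp only [bahH, one_pow, mul_one, bahI_one] at h1
    linarith
  exact le_csSup hbdd hmem


set_option maxHeartbeats 2000000 in
/-- For `p ≥ 3` and `β > β₀ > β*(p)`, with `m = m_*(β,p)` the positive global maximizer
of `H_{β,p}` on `[−1,1]`:
`sup_{x ∈ η_p⁻¹((β,∞))} H_{β₀,p}(x) = sup_{x ∈ (m, 1]} H_{β₀,p}(x)` holds if and only if
`H_{β₀,p}(m) ≥ 0`. -/
theorem statement8 (p : ℕ) (hp : 3 ≤ p) (β β₀ : ℝ) (h0 : betaStar p < β₀) (h1 : β₀ < β)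
    (m : ℝ) (hm0 : 0 < m) (hm1 : m ∈ Set.Icc (-1 : ℝ) 1)
    (hmax : IsMaxOn (bahH β p) (Set.Icc (-1 : ℝ) 1) m) :
    sSup (bahH β₀ p '' {t ∈ Set.Icc (-1 : ℝ) 1 | β < etaFn p t})
      = sSup (bahH β₀ p '' Set.Ioc m 1) ↔ 0 ≤ bahH β₀ p m := by
  have hp1 : 1 ≤ p := by omega
  have hpR : (3:ℝ) ≤ (p:ℝ) := by exact_mod_cast hp
  have hpR0 : (0:ℝ) < (p:ℝ) := by linarith
  have hβ₀pos : 0 < β₀ := lt_of_le_of_lt (betaStar_nonneg p (by omega)) h0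
  have hβpos : 0 < β := lt_trans hβ₀pos h1
  -- m < 1
  have hm1' : m < 1 := by
    rcases lt_or_eq_of_le hm1.2 with h | h
    · exact h
    exfalso
    obtain ⟨e, he⟩ : ∃ e : ℝ, e = Real.exp (-(2 * β * p + 1)) := ⟨_, rfl⟩
    have he0 : 0 < e := he ▸ Real.exp_pos _
    have he1 : e < 1 := by
      rw [he, Real.exp_lt_one_iff]
      nlinarith
    obtain ⟨x, hx⟩ : ∃ x : ℝ, x = 1 - e := ⟨_, rfl⟩
    have hx0 : 0 ≤ x := by rw [hx]; linarith
    have hx1 : x < 1 := by rw [hx]; linarith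
    have hcomp : bahH β p x ≤ bahH β p m :=
      hmax (show x ∈ Set.Icc (-1:ℝ) 1 from ⟨by linarith, le_of_lt hx1⟩)
    rw [h] at hcomp
    have f1 : 1 + (p:ℝ) * (x - 1) ≤ x ^ p := by
      have := one_add_mul_le_pow (by linarith : (-2:ℝ) ≤ x - 1) p
      simpa using this
    have f1' : β * (1 - (p:ℝ) * e) ≤ β * x ^ p := by
      apply mul_le_mul_of_nonneg_left _ (le_of_lt hβpos)
      have hxe : (1:ℝ) - (p:ℝ) * e = 1 + (p:ℝ) * (x - 1) := by rw [hx]; ring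
      linarith
    have f2 : (1 + x) * Real.log (1 + x) ≤ 2 * Real.log 2 := by
      have hl1 : Real.log (1 + x) ≤ Real.log 2 :=
        Real.log_le_log (by linarith) (by linarith)
      have hl0 : 0 ≤ Real.log (1 + x) := Real.log_nonneg (by linarith)
      nlinarith
    have f3 : (1 - x) * Real.log (1 - x) = e * (-(2 * β * p + 1)) := by
      have hex : (1:ℝ) - x = e := by rw [hx]; ring
      rw [hex, he, Real.log_exp]
    have hI : bahI x ≤ Real.log 2 - e * (2 * β * p + 1) / 2 := by
      rw [bahI, f3]
      nlinarith [f2]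
    have hH1 : bahH β p 1 = β - Real.log 2 := by
      simp [bahH, bahI_one]
    have hHx : bahH β p x = β * x ^ p - bahI x := rfl
    rw [hH1, hHx] at hcomp
    nlinarith
  -- comparison on (m, 1]
  have hmlt : ∀ x : ℝ, x ∈ Set.Icc (-1:ℝ) 1 → m < x → bahH β₀ p x < bahH β₀ p m := by
    intro x hx hmx
    have hxpm : m ^ p < x ^ p := pow_lt_pow_left₀ hmx (le_of_lt hm0) (by omega)
    have hprod : (β - β₀) * m ^ p < (β - β₀) * x ^ p :=
      mul_lt_mul_of_pos_left hxpm (by linarith)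
    have hcomp : bahH β p x ≤ bahH β p m := hmax hx
    simp only [bahH] at hcomp ⊢
    nlinarith
  -- derivative zero at m
  have harc : arctanh m = β * ((p:ℝ) * m ^ (p - 1)) := by
    have hloc : IsLocalMax (bahH β p) m :=
      hmax.isLocalMax (Icc_mem_nhds (by linarith) hm1')
    have := hloc.hasDerivAt_eq_zero (hasDerivAt_bahH β p (by linarith) hm1')
    linarith
  have hgm : gF p m = β * p := by
    rw [gF, harc]
    field_simp [pow_ne_zero _ (ne_of_gt hm0)]
  have hetam : etaFn p m = β := by
    rw [etaFn_eq hp1 (ne_of_gt hm0), hgm]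
    field_simp
  -- eta > β iff gF > β p, for nonzero t
  have hgiff : ∀ t : ℝ, t ≠ 0 → (β < etaFn p t ↔ β * p < gF p t) := by
    intro t ht
    rw [etaFn_eq hp1 ht]
    constructor
    · intro hlt
      have h2 := mul_lt_mul_of_pos_left hlt hpR0
      calc β * p = (p:ℝ) * β := by ring
        _ < (p:ℝ) * ((p:ℝ)⁻¹ * gF p t) := h2
        _ = gF p t := by field_simp
    · intro hlt
      have h2 := mul_lt_mul_of_pos_left hlt (inv_pos.2 hpR0)
      calc β = (p:ℝ)⁻¹ * (β * p) := by field_simp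
        _ < (p:ℝ)⁻¹ * gF p t := h2
  -- 0 ≤ φ(m)
  have hφm : 0 ≤ phiF p m := by
    by_contra hneg
    push_neg at hneg
    have ha' : ∀ᶠ y in 𝓝 m, phiF p y < 0 :=
      ContinuousAt.eventually_lt (hasDerivAt_phiF p (by linarith) hm1').continuousAt
        continuousAt_const hneg
    have hb' : ∀ᶠ y in 𝓝 m, y < 1 := Iio_mem_nhds hm1'
    have hc' : ∀ᶠ y in 𝓝[>] m, phiF p y < 0 ∧ y < 1 :=
      (ha'.and hb').filter_mono nhdsWithin_le_nhds
    obtain ⟨c, ⟨hφc, hc1⟩, hcm⟩ := (hc'.and self_mem_nhdsWithin).exists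
    have hcm' : m < c := hcm
    have hganti := gF_anti p hp (lt_trans hm0 hcm') hc1 (le_of_lt hφc)
    have hmono : StrictMonoOn (bahH β p) (Set.Icc m c) := by
      apply strictMonoOn_of_deriv_pos (convex_Icc m c)
      · exact (continuous_bahH β p).continuousOn
      · intro z hz
        rw [interior_Icc] at hz
        have hz0 : 0 < z := lt_trans hm0 hz.1
        have hz1 : z < 1 := lt_trans hz.2 hc1
        rw [(hasDerivAt_bahH β p (by linarith) hz1).deriv]
        have hglt : gF p z < gF p m :=
          hganti ⟨hm0, le_of_lt hcm'⟩ ⟨hz0, le_of_lt hz.2⟩ hz.1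
        rw [hgm, gF] at hglt
        have := (div_lt_iff₀ (pow_pos hz0 (p - 1))).1 hglt
        nlinarith
    have hlt := hmono (left_mem_Icc.2 (le_of_lt hcm')) (right_mem_Icc.2 (le_of_lt hcm')) hcm'
    have := hmax (show c ∈ Set.Icc (-1:ℝ) 1 from ⟨by linarith, le_of_lt hc1⟩)
    exact absurd hlt (not_lt.2 this)
  -- η > β on (m, 1)
  have hE1 : ∀ t : ℝ, m < t → t < 1 → β < etaFn p t := by
    intro t htm ht1
    have ht0 : 0 < t := lt_trans hm0 htm
    rw [hgiff t (ne_of_gt ht0), ← hgm]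
    exact gF_mono p hp hm0 hm1' hφm ⟨le_refl m, hm1'⟩ ⟨le_of_lt htm, ht1⟩ htm
  -- in-first-component implies H β₀ negative
  have hE2 : ∀ t : ℝ, 0 < t → t < m → β < etaFn p t → bahH β₀ p t < 0 := by
    intro t ht0 htm hβt
    have ht1 : t < 1 := lt_trans htm hm1'
    have hgt : β * p < gF p t := (hgiff t (ne_of_gt ht0)).1 hβt
    have hφt : phiF p t ≤ 0 := by
      by_contra hc
      push_neg at hc
      have := gF_mono p hp ht0 ht1 (le_of_lt hc) ⟨le_refl t, ht1⟩ ⟨le_of_lt htm, hm1'⟩ htm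
      rw [hgm] at this
      linarith
    have hganti := gF_anti p hp ht0 ht1 hφt
    have hanti : StrictAntiOn (bahH β p) (Set.Icc 0 t) := by
      apply strictAntiOn_of_deriv_neg (convex_Icc 0 t)
      · exact (continuous_bahH β p).continuousOn
      · intro z hz
        rw [interior_Icc] at hz
        have hz1 : z < 1 := lt_trans hz.2 ht1
        rw [(hasDerivAt_bahH β p (by linarith [hz.1]) hz1).deriv]
        have hglt : gF p t < gF p z := hganti ⟨hz.1, le_of_lt hz.2⟩ ⟨ht0, le_refl t⟩ hz.2
        have hgz : β * p < gF p z := lt_trans hgt hglt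
        rw [gF] at hgz
        have := (lt_div_iff₀ (pow_pos hz.1 (p - 1))).1 hgz
        nlinarith
    have hlt := hanti (left_mem_Icc.2 (le_of_lt ht0)) (right_mem_Icc.2 (le_of_lt ht0)) ht0
    rw [bahH_zero β p (by omega)] at hlt
    have hpp : 0 < (β - β₀) * t ^ p := mul_pos (by linarith) (pow_pos ht0 p)
    simp only [bahH] at hlt ⊢
    nlinarith
  -- small t are in the set
  have hsmall : ∀ t : ℝ, 0 < t → t < 1 → 2 * β * (p:ℝ) * t < 1 → β < etaFn p t := by
    intro t ht0 ht1 htb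
    rw [hgiff t (ne_of_gt ht0)]
    have ha : t / 2 ≤ arctanh t := by
      rw [arctanh_eq (by linarith) ht1]
      have hl1 : 0 ≤ Real.log (1 + t) := Real.log_nonneg (by linarith)
      have hl2 : Real.log (1 - t) ≤ -t := by
        have := Real.log_le_sub_one_of_pos (by linarith : (0:ℝ) < 1 - t)
        linarith
      linarith
    have hpow : t ^ (p - 1) ≤ t ^ 2 :=
      pow_le_pow_of_le_one (le_of_lt ht0) (le_of_lt ht1) (by omega)
    have hpowpos : (0:ℝ) < t ^ (p - 1) := pow_pos ht0 _
    rw [gF, lt_div_iff₀ hpowpos]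
    have h2 : β * (p:ℝ) * t ^ (p - 1) ≤ β * (p:ℝ) * t ^ 2 :=
      mul_le_mul_of_nonneg_left hpow (by positivity)
    have h3 : β * (p:ℝ) * t ^ 2 < t / 2 := by
      linarith [mul_lt_mul_of_pos_right htb (half_pos ht0)]
    linarith
  -- continuity with ε-δ
  have happrox : ∀ a : ℝ, ∀ ε > (0:ℝ), ∃ δ > (0:ℝ), ∀ x : ℝ,
      |x - a| < δ → |bahH β₀ p x - bahH β₀ p a| < ε := by
    intro a ε hε
    obtain ⟨δ, hδ0, hδ⟩ := Metric.continuousAt_iff.1 (continuous_bahH β₀ p).continuousAt ε hε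
    exact ⟨δ, hδ0, fun x hx => hδ (by rwa [Real.dist_eq])⟩
  -- upper bound on the sublevel-set supremum
  have hpos : ∀ t : ℝ, 0 < t → t ≤ 1 → β < etaFn p t →
      bahH β₀ p t ≤ max 0 (bahH β₀ p m) := by
    intro t ht0 ht1 hβt
    have ht1' : t < 1 := by
      rcases lt_or_eq_of_le ht1 with h | h
      · exact h
      exfalso
      rw [h] at hβt
      simp [etaFn, arctanh_one] at hβt
      linarith
    rcases lt_trichotomy t m with h | h | h
    · exact le_trans (le_of_lt (hE2 t ht0 h hβt)) (le_max_left 0 _)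
    · exfalso
      rw [h, hetam] at hβt
      exact lt_irrefl _ hβt
    · exact le_trans (le_of_lt (hmlt t ⟨by linarith, ht1⟩ h)) (le_max_right 0 _)
  have hubS : ∀ y ∈ bahH β₀ p '' {t ∈ Set.Icc (-1:ℝ) 1 | β < etaFn p t},
      y ≤ max 0 (bahH β₀ p m) := by
    rintro y ⟨x, hx, rfl⟩
    obtain ⟨hxI, hxβ⟩ := hx
    rcases lt_trichotomy x 0 with hx0 | hx0 | hx0
    · have hxm1 : -1 < x := by
        rcases lt_or_eq_of_le hxI.1 with h | h
        · exact h
        exfalso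
        rw [← h] at hxβ
        simp [etaFn, arctanh_negone] at hxβ
        linarith
      rcases Nat.even_or_odd p with hpe | hpo
      · have hxx : etaFn p (-x) = etaFn p x := by
          have hxne : x ≠ 0 := ne_of_lt hx0
          rw [etaFn, etaFn, if_neg hxne, if_neg (neg_ne_zero.2 hxne)]
          rw [arctanh_neg hxm1 (by linarith)]
          have hodd : Odd (1 - (p:ℤ)) := odd_one.sub_even ((Int.even_coe_nat p).2 hpe)
          rw [hodd.neg_zpow]
          ring
        have hHx : bahH β₀ p (-x) = bahH β₀ p x := by
          rw [bahH, bahH, bahI_neg, hpe.neg_pow]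
        rw [← hHx]
        exact hpos (-x) (by linarith) (by linarith [hxI.1]) (by rw [hxx]; exact hxβ)
      · exfalso
        have heven : Even (1 - (p:ℤ)) := odd_one.sub_odd ((Int.odd_coe_nat p).2 hpo)
        have hzp : 0 < x ^ (1 - (p:ℤ)) := heven.zpow_pos (ne_of_lt hx0)
        have harcneg : arctanh x < 0 := by
          rw [arctanh]
          apply div_neg_of_neg_of_pos _ (by norm_num)
          apply Real.log_neg
          · exact div_pos (by linarith) (by linarith)
          · rw [div_lt_one (by linarith)]
            linarith
        have hlt0 : etaFn p x < 0 := by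
          rw [etaFn, if_neg (ne_of_lt hx0)]
          exact mul_neg_of_pos_of_neg (mul_pos (inv_pos.2 hpR0) hzp) harcneg
        linarith
    · exfalso
      rw [hx0] at hxβ
      simp [etaFn] at hxβ
      linarith
    · exact hpos x hx0 hxI.2 hxβ
  -- small element of S
  have hSmem_small : ∀ t : ℝ, 0 < t → t < 1 → 2 * β * (p:ℝ) * t < 1 →
      t ∈ {t ∈ Set.Icc (-1:ℝ) 1 | β < etaFn p t} := fun t h a b =>
    ⟨⟨by linarith, le_of_lt a⟩, hsmall t h a b⟩
  have hbp1 : (0:ℝ) < 2 * β * p + 1 := by positivity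
  have hbppos : (0:ℝ) < 2 * β * p := by positivity
  have hfrac1 : (1:ℝ)/(2 * β * (p:ℝ) + 1) < 1 := by
    rw [div_lt_one hbp1]; linarith
  have hfracb : 2 * β * (p:ℝ) * (1/(2 * β * (p:ℝ) + 1)) < 1 := by
    rw [mul_one_div, div_lt_one hbp1]; linarith
  have hne : (bahH β₀ p '' {t ∈ Set.Icc (-1:ℝ) 1 | β < etaFn p t}).Nonempty :=
    ⟨_, 1/(2 * β * (p:ℝ) + 1), hSmem_small _ (by positivity) hfrac1 hfracb, rfl⟩
  have hbddS : BddAbove (bahH β₀ p '' {t ∈ Set.Icc (-1:ℝ) 1 | β < etaFn p t}) :=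
    ⟨max 0 (bahH β₀ p m), fun y hy => hubS y hy⟩
  have hge0 : (0:ℝ) ≤ sSup (bahH β₀ p '' {t ∈ Set.Icc (-1:ℝ) 1 | β < etaFn p t}) := by
    apply le_csSup_of_approx hbddS
    intro ε hε
    obtain ⟨δ, hδ0, hδ⟩ := happrox 0 ε hε
    set c := min (δ/2) (1/(2 * β * (p:ℝ) + 1)) with hc
    have hc0 : 0 < c := lt_min (by linarith) (by positivity)
    have hc1 : c < 1 := lt_of_le_of_lt (min_le_right _ _) hfrac1
    have hcb : 2 * β * (p:ℝ) * c < 1 :=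
      lt_of_le_of_lt (mul_le_mul_of_nonneg_left (min_le_right _ _) (le_of_lt hbppos)) hfracb
    refine ⟨c, hSmem_small c hc0 hc1 hcb, ?_⟩
    have hd : |c - 0| < δ := by
      rw [sub_zero, abs_of_pos hc0]
      exact lt_of_le_of_lt (min_le_left _ _) (by linarith)
    have habs := abs_lt.1 (hδ c hd)
    rw [bahH_zero β₀ p (by omega), sub_zero] at habs
    linarith [habs.1]
  have happm : ∀ ε > (0:ℝ), ∃ c : ℝ, m < c ∧ c < 1 ∧ bahH β₀ p m - ε < bahH β₀ p c := by
    intro ε hε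
    obtain ⟨δ, hδ0, hδ⟩ := happrox m ε hε
    set c := min (m + δ/2) ((m + 1)/2) with hc
    have hcm : m < c := lt_min (by linarith) (by linarith)
    have hc1 : c < 1 := lt_of_le_of_lt (min_le_right _ _) (by linarith)
    have hd : |c - m| < δ := by
      rw [abs_of_pos (by linarith)]
      have := min_le_left (m + δ/2) ((m + 1)/2)
      have hcle : c ≤ m + δ/2 := this
      linarith
    have habs := abs_lt.1 (hδ c hd)
    exact ⟨c, hcm, hc1, by linarith [habs.1]⟩
  have hgem : bahH β₀ p m ≤
      sSup (bahH β₀ p '' {t ∈ Set.Icc (-1:ℝ) 1 | β < etaFn p t}) := by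
    apply le_csSup_of_approx hbddS
    intro ε hε
    obtain ⟨c, hcm, hc1, hval⟩ := happm ε hε
    exact ⟨c, ⟨⟨by linarith, le_of_lt hc1⟩, hE1 c hcm hc1⟩, hval⟩
  have keyL : sSup (bahH β₀ p '' {t ∈ Set.Icc (-1:ℝ) 1 | β < etaFn p t})
      = max 0 (bahH β₀ p m) :=
    le_antisymm (csSup_le hne hubS) (max_le hge0 hgem)
  have hubR : ∀ y ∈ bahH β₀ p '' Set.Ioc m 1, y ≤ bahH β₀ p m := by
    rintro y ⟨x, hx, rfl⟩
    exact le_of_lt (hmlt x ⟨by linarith [hx.1], hx.2⟩ hx.1)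
  have hneR : (bahH β₀ p '' Set.Ioc m 1).Nonempty :=
    ⟨_, (m + 1)/2, ⟨by linarith, by linarith⟩, rfl⟩
  have keyR : sSup (bahH β₀ p '' Set.Ioc m 1) = bahH β₀ p m := by
    refine le_antisymm (csSup_le hneR hubR) ?_
    apply le_csSup_of_approx ⟨bahH β₀ p m, fun y hy => hubR y hy⟩
    intro ε hε
    obtain ⟨c, hcm, hc1, hval⟩ := happm ε hε
    exact ⟨c, ⟨hcm, le_of_lt hc1⟩, hval⟩
  rw [keyL, keyR]
  exact max_eq_right_iff
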